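/- Conversely, if f: ℝ → ℂ is 2π-periodic, continuous, and its Fourier coefficients satisfy |f̂(ξ)| ≤ C e^{-κ|ξ|} for all ξ ∈ ℤ and some C, κ > 0, then f extends holomorphically to the open strip {z ∈ ℂ : |Im z| < κ}. -/

import Mathlib

open Real Complex

lemma summable_exp_int_abs {a : ℝ} (ha : a < 0) :
    Summable fun n : ℤ => Real.exp (a * |(n : ℝ)|) := by
  apply Summable.of_nat_of_neg <;>
  · simp only [Int.cast_natCast, Int.cast_neg, abs_neg, Nat.abs_cast]
    simpa only [mul_comm] using Real.summable_exp_nat_mul_iff.mpr ha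

theorem stmt5 (f : ℝ → ℂ) (hf : Continuous f)
    (hfp : Function.Periodic f (2 * Real.pi))
    (C κ : ℝ) (hC : 0 < C) (hκ : 0 < κ)
    (hdecay : ∀ ξ : ℤ,
      ‖(1 / (2 * (Real.pi : ℂ))) *
          ∫ x in (0 : ℝ)..(2 * Real.pi), f x * Complex.exp (-Complex.I * ξ * x)‖ ≤
        C * Real.exp (-κ * |(ξ : ℝ)|)) :
    ∃ F : ℂ → ℂ,
      (∀ z : ℂ, |z.im| < κ → DifferentiableAt ℂ F z) ∧
      ∀ x : ℝ, F x = f x := by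
  haveI : Fact (0 < 2 * Real.pi) := ⟨by positivity⟩
  have hg : Continuous hfp.lift := continuous_coinduced_dom.mpr hf
  set g : C(AddCircle (2 * Real.pi), ℂ) := ⟨hfp.lift, hg⟩ with hgdef
  set c : ℤ → ℂ := fourierCoeff (g : AddCircle (2 * Real.pi) → ℂ) with hcdef
  have hfourier : ∀ (n : ℤ) (x : ℝ),
      (fourier n (x : AddCircle (2 * Real.pi)) : ℂ) = Complex.exp (Complex.I * n * x) := by
    intro n x
    rw [fourier_coe_apply]
    congr 1
    have hπ : (Real.pi : ℂ) ≠ 0 := Complex.ofReal_ne_zero.mpr Real.pi_ne_zero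
    push_cast
    field_simp
  have hc : ∀ n : ℤ, c n =
      (1 / (2 * (Real.pi : ℂ))) *
        ∫ x in (0 : ℝ)..(2 * Real.pi), f x * Complex.exp (-Complex.I * n * x) := by
    intro n
    rw [hcdef, fourierCoeff_eq_intervalIntegral _ n 0, zero_add]
    rw [Complex.real_smul]
    push_cast
    congr 1
    apply intervalIntegral.integral_congr
    intro x _
    have := hfourier (-n) x
    simp only [smul_eq_mul]
    rw [this]
    push_cast
    rw [mul_comm]
    congr 2
    ring
  have hcb : ∀ n : ℤ, ‖c n‖ ≤ C * Real.exp (-κ * |(n : ℝ)|) := by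
    intro n; rw [hc n]; exact hdecay n
  have hsum : Summable c := by
    apply Summable.of_norm_bounded ?_ hcb
    exact (summable_exp_int_abs (neg_neg_of_pos hκ)).mul_left C
  refine ⟨fun z => ∑' n : ℤ, c n * Complex.exp (Complex.I * n * z), ?_, ?_⟩
  · intro z hz
    set κ' : ℝ := (|z.im| + κ) / 2 with hκ'
    have hκ'1 : |z.im| < κ' := by rw [hκ']; linarith
    have hκ'2 : κ' < κ := by rw [hκ']; linarith
    set U : Set ℂ := {w : ℂ | |w.im| < κ'} with hU
    have hUopen : IsOpen U := by
      have : U = Complex.im ⁻¹' (Set.Ioo (-κ') κ') := by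
        ext w; simp [hU, abs_lt]
      rw [this]
      exact isOpen_Ioo.preimage Complex.continuous_im
    have hzU : z ∈ U := hκ'1
    have hdiff : DifferentiableOn ℂ
        (fun w : ℂ => ∑' n : ℤ, c n * Complex.exp (Complex.I * n * w)) U := by
      apply differentiableOn_tsum_of_summable_norm
        (u := fun n : ℤ => C * Real.exp ((κ' - κ) * |(n : ℝ)|))
      · exact (summable_exp_int_abs (by linarith)).mul_left C
      · intro n
        exact (Differentiable.differentiableOn (by fun_prop))
      · exact hUopen
      · intro n w hw
        rw [norm_mul, Complex.norm_exp]
        have h1 : (Complex.I * n * w).re = -(n : ℝ) * w.im := by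
          simp [Complex.mul_re, Complex.mul_im]
        rw [h1]
        have h2 : Real.exp (-(n : ℝ) * w.im) ≤ Real.exp (|(n : ℝ)| * κ') := by
          apply Real.exp_le_exp.mpr
          calc -(n : ℝ) * w.im ≤ |(-(n : ℝ)) * w.im| := le_abs_self _
            _ = |(n : ℝ)| * |w.im| := by rw [abs_mul, abs_neg]
            _ ≤ |(n : ℝ)| * κ' := by
                exact mul_le_mul_of_nonneg_left (le_of_lt hw) (abs_nonneg _)
        calc ‖c n‖ * Real.exp (-(n : ℝ) * w.im)
            ≤ (C * Real.exp (-κ * |(n : ℝ)|)) * Real.exp (|(n : ℝ)| * κ') := by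
              apply mul_le_mul (hcb n) h2 (Real.exp_nonneg _)
              positivity
          _ = C * Real.exp ((κ' - κ) * |(n : ℝ)|) := by
              rw [mul_assoc, ← Real.exp_add]; ring_nf
    exact (hdiff.differentiableAt (hUopen.mem_nhds hzU))
  · intro x
    have hps := has_pointwise_sum_fourier_series_of_summable (f := g) hsum
      (x : AddCircle (2 * Real.pi))
    have : HasSum (fun n : ℤ => c n * Complex.exp (Complex.I * n * (x : ℂ))) (f x) := by
      have hgx : g (x : AddCircle (2 * Real.pi)) = f x := hfp.lift_coe x
      rw [← hgx]
      convert hps using 2 with n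
      rw [smul_eq_mul, hfourier n x]
    exact this.tsum_eq
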